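/- Let V be a finite-dimensional real inner product space (positive definite symmetric bilinear form) and let (v_i)_{i∈I} be a finite nonempty family of vectors in V such that ⟨v_i, v_j⟩ ≤ 0 for all i ≠ j. Assume the family is indecomposable: the index set I cannot be written as a disjoint union of two nonempty subsets I₁ and I₂ with ⟨v_i, v_j⟩ = 0 for all i ∈ I₁ and j ∈ I₂. Then either the vectors (v_i)_{i∈I} are linearly independent, or the span of the v_i has dimension |I| − 1 and there exists a linear dependence Σ_{i∈I} a_i v_i = 0 in which all the coefficients a_i are strictly positive real numbers. -/

import Mathlib

open scoped RealInnerProductSpace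

/-- A nonnegative linear relation among an indecomposable family with pairwise nonpositive
inner products is either trivial or has all coefficients strictly positive. -/
lemma stmt0_dicho {V : Type*} [NormedAddCommGroup V] [InnerProductSpace ℝ V]
    {I : Type*} [Fintype I] (v : I → V)
    (hneg : ∀ i j : I, i ≠ j → ⟪v i, v j⟫ ≤ 0)
    (hindec : ¬ ∃ I₁ I₂ : Set I, I₁.Nonempty ∧ I₂.Nonempty ∧ Disjoint I₁ I₂ ∧
        I₁ ∪ I₂ = Set.univ ∧ ∀ i ∈ I₁, ∀ j ∈ I₂, ⟪v i, v j⟫ = 0)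
    (d : I → ℝ) (hd : ∀ i, 0 ≤ d i) (hrel : ∑ i, d i • v i = 0) :
    (∀ i, d i = 0) ∨ ∀ i, 0 < d i := by
  by_contra h
  push_neg at h
  obtain ⟨⟨i₀, hi₀⟩, ⟨k, hk⟩⟩ := h
  have hi₀' : 0 < d i₀ := lt_of_le_of_ne (hd i₀) (Ne.symm hi₀)
  have hk' : d k = 0 := le_antisymm hk (hd k)
  apply hindec
  refine ⟨{i | 0 < d i}, {i | 0 < d i}ᶜ, ⟨i₀, hi₀'⟩, ⟨k, by simp [hk']⟩,
    disjoint_compl_right, Set.union_compl_self _, ?_⟩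
  intro i hi j hj
  have hj0 : d j = 0 := le_antisymm (not_lt.mp hj) (hd j)
  have hsum : ∑ m, d m * ⟪v j, v m⟫ = 0 := by
    have : ⟪v j, ∑ m, d m • v m⟫ = (0 : ℝ) := by rw [hrel, inner_zero_right]
    simpa [inner_sum, real_inner_smul_right] using this
  have hterm : ∀ m ∈ Finset.univ, d m * ⟪v j, v m⟫ ≤ 0 := by
    intro m _
    rcases eq_or_ne m j with rfl | hmj
    · simp [hj0]
    · exact mul_nonpos_of_nonneg_of_nonpos (hd m) (hneg j m (Ne.symm hmj))
  have hall := (Finset.sum_eq_zero_iff_of_nonpos hterm).mp hsum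
  have hvi : d i * ⟪v j, v i⟫ = 0 := hall i (Finset.mem_univ i)
  have : ⟪v j, v i⟫ = 0 := by
    rcases mul_eq_zero.mp hvi with h | h
    · exact absurd h (ne_of_gt hi)
    · exact h
  rw [real_inner_comm] at this
  exact this

/-- The positive part of a linear relation is again a linear relation, for a family with
pairwise nonpositive inner products. -/
lemma stmt0_pospart {V : Type*} [NormedAddCommGroup V] [InnerProductSpace ℝ V]
    {I : Type*} [Fintype I] (v : I → V)
    (hneg : ∀ i j : I, i ≠ j → ⟪v i, v j⟫ ≤ 0)
    (c : I → ℝ) (hrel : ∑ i, c i • v i = 0) :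
    ∑ i, max (c i) 0 • v i = 0 := by
  set p : I → ℝ := fun i => max (c i) 0 with hp
  set n : I → ℝ := fun i => max (-c i) 0 with hn
  have hpn : ∀ i, p i - n i = c i := by
    intro i
    simp only [hp, hn, max_def]
    split_ifs <;> linarith
  have hpnn : ∀ i, 0 ≤ p i := fun i => le_max_right _ _
  have hnnn : ∀ i, 0 ≤ n i := fun i => le_max_right _ _
  have hmul : ∀ i, p i * n i = 0 := by
    intro i
    simp only [hp, hn, max_def]
    split_ifs with h1 h2 <;> first | (exfalso; linarith) | simp | nlinarith
  have hw : ∑ i, p i • v i = ∑ i, n i • v i := by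
    have h2 : ∑ i, p i • v i - ∑ i, n i • v i = 0 := by
      rw [← Finset.sum_sub_distrib]
      have h1 : ∑ i, (p i - n i) • v i = 0 := by simp only [hpn]; exact hrel
      simpa [sub_smul] using h1
    exact sub_eq_zero.mp h2
  have hip : ⟪∑ i, p i • v i, ∑ j, n j • v j⟫ ≤ 0 := by
    rw [sum_inner]
    apply Finset.sum_nonpos
    intro i _
    rw [inner_sum]
    apply Finset.sum_nonpos
    intro j _
    rw [real_inner_smul_left, real_inner_smul_right, ← mul_assoc]
    rcases eq_or_ne i j with rfl | hij
    · rw [hmul i, zero_mul]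
    · exact mul_nonpos_of_nonneg_of_nonpos
        (mul_nonneg (hpnn i) (hnnn j)) (hneg i j hij)
  rw [← hw] at hip
  exact real_inner_self_nonpos.mp hip

theorem stmt0 {V : Type*} [NormedAddCommGroup V] [InnerProductSpace ℝ V]
    [FiniteDimensional ℝ V] {I : Type*} [Fintype I] [Nonempty I] (v : I → V)
    (hneg : ∀ i j : I, i ≠ j → ⟪v i, v j⟫ ≤ 0)
    (hindec : ¬ ∃ I₁ I₂ : Set I, I₁.Nonempty ∧ I₂.Nonempty ∧ Disjoint I₁ I₂ ∧
        I₁ ∪ I₂ = Set.univ ∧ ∀ i ∈ I₁, ∀ j ∈ I₂, ⟪v i, v j⟫ = 0) :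
    LinearIndependent ℝ v ∨
      (Module.finrank ℝ (Submodule.span ℝ (Set.range v)) = Fintype.card I - 1 ∧
        ∃ a : I → ℝ, (∀ i, 0 < a i) ∧ ∑ i, a i • v i = 0) := by
  by_cases hli : LinearIndependent ℝ v
  · exact Or.inl hli
  right
  rw [Fintype.linearIndependent_iff] at hli
  push_neg at hli
  obtain ⟨c, hc, i₁, hi₁⟩ := hli
  -- build a nonzero nonnegative relation
  obtain ⟨d, hd0, hdrel, hdne⟩ :
      ∃ d : I → ℝ, (∀ i, 0 ≤ d i) ∧ ∑ i, d i • v i = 0 ∧ ∃ i, d i ≠ 0 := by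
    rcases lt_or_gt_of_ne hi₁ with h | h
    · refine ⟨fun i => max (-c i) 0, fun i => le_max_right _ _, ?_, i₁, ?_⟩
      · exact stmt0_pospart v hneg (fun i => -c i)
          (by simpa [neg_smul] using congrArg Neg.neg hc)
      · have : (0 : ℝ) < -c i₁ := by linarith
        simp only [max_eq_left this.le]
        exact ne_of_gt this
    · refine ⟨fun i => max (c i) 0, fun i => le_max_right _ _,
        stmt0_pospart v hneg c hc, i₁, ?_⟩
      simp only [max_eq_left h.le]
      exact ne_of_gt h
  -- all coefficients are positive
  have ha : ∀ i, 0 < d i := by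
    rcases stmt0_dicho v hneg hindec d hd0 hdrel with h0 | hpos
    · exact absurd (h0 hdne.choose) hdne.choose_spec
    · exact hpos
  refine ⟨?_, d, ha, hdrel⟩
  -- dimension count
  set f : (I → ℝ) →ₗ[ℝ] V := Fintype.linearCombination ℝ v with hf
  have hfapp : ∀ c : I → ℝ, f c = ∑ i, c i • v i := by
    intro c
    simp [hf, Fintype.linearCombination_apply]
  have hker : LinearMap.ker f = Submodule.span ℝ {d} := by
    apply le_antisymm
    · intro c hcker
      have hcrel : ∑ i, c i • v i = 0 := by
        rw [← hfapp]; exact hcker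
      obtain ⟨i₀, -, hmin⟩ := Finset.exists_min_image Finset.univ
        (fun i => c i / d i) Finset.univ_nonempty
      set t := c i₀ / d i₀ with ht
      have hnn : ∀ i, 0 ≤ c i - t * d i := by
        intro i
        have h1 : t ≤ c i / d i := hmin i (Finset.mem_univ i)
        have h2 : t * d i ≤ c i := (le_div_iff₀ (ha i)).mp h1
        linarith
      have hrel' : ∑ i, (c i - t * d i) • v i = 0 := by
        have : ∑ i, (c i - t * d i) • v i
            = ∑ i, c i • v i - t • ∑ i, d i • v i := by
          rw [Finset.smul_sum, ← Finset.sum_sub_distrib]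
          congr 1
          ext i
          rw [sub_smul, mul_smul]
        rw [this, hcrel, hdrel, smul_zero, sub_zero]
      rcases stmt0_dicho v hneg hindec _ hnn hrel' with h0 | hpos
      · have hceq : c = t • d := by
          funext i
          have := h0 i
          simp only [Pi.smul_apply, smul_eq_mul]
          linarith
        rw [hceq]
        exact Submodule.smul_mem _ _ (Submodule.mem_span_singleton_self d)
      · exfalso
        have : c i₀ - t * d i₀ = 0 := by
          rw [ht, div_mul_cancel₀ _ (ne_of_gt (ha i₀)), sub_self]
        exact ne_of_gt (hpos i₀) this
    · rw [Submodule.span_le, Set.singleton_subset_iff]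
      show d ∈ LinearMap.ker f
      rw [LinearMap.mem_ker, hfapp]
      exact hdrel
  have hdne0 : d ≠ 0 := fun h => (ha (Classical.arbitrary I)).ne'
    (congrFun h (Classical.arbitrary I))
  have h1 : Module.finrank ℝ (LinearMap.ker f) = 1 := by
    rw [hker]
    exact finrank_span_singleton hdne0
  have h2 := LinearMap.finrank_range_add_finrank_ker f
  rw [Fintype.range_linearCombination, h1, Module.finrank_fintype_fun_eq_card] at h2
  have h3 : 1 ≤ Fintype.card I := Fintype.card_pos
  omega
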